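/- Let P be a finite set of points in the plane in general position and let u, w ∈ P be distinct. If the canonical triangle T_{u,w} has minimal size among the canonical triangles T_{p,q} over all ordered pairs of distinct points p, q ∈ P, then u and w are adjacent in the θ₅-graph of P. -/

import Mathlib

noncomputable section

/-- The plane ℝ². -/
abbrev Plane : Type := EuclideanSpace ℝ (Fin 2)

/-- The bisector direction of the `i`-th cone: the unit vector obtained by rotating `(0,1)`
clockwise by `i · 2π/5`. -/
noncomputable def coneDir (i : Fin 5) : Plane :=
  WithLp.toLp 2 ![Real.sin ((i : ℕ) * (2 * Real.pi / 5)), Real.cos ((i : ℕ) * (2 * Real.pi / 5))]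

/-- The cone `Cᵢᵘ`: all points `p ≠ u` such that the angle between `p - u` and the
bisector direction `coneDir i` is less than `π/5`. -/
def cone (u : Plane) (i : Fin 5) : Set Plane :=
  {p | p ≠ u ∧ InnerProductGeometry.angle (p - u) (coneDir i) < Real.pi / 5}

/-- A set of points is in general position if no difference of two distinct points makes an
angle that is an integer multiple of `π/5` with either coordinate axis. -/
def GeneralPosition (P : Set Plane) : Prop :=
  ∀ p ∈ P, ∀ q ∈ P, p ≠ q → ∀ k : ℤ,
    (p - q) 0 * Real.cos (k * (Real.pi / 5)) - (p - q) 1 * Real.sin (k * (Real.pi / 5)) ≠ 0 ∧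
    (p - q) 0 * Real.sin (k * (Real.pi / 5)) + (p - q) 1 * Real.cos (k * (Real.pi / 5)) ≠ 0

/-- `v` is the point of `P` in the cone `Cᵢᵘ` that is closest to `u`, where distance is
measured by projection onto the bisector of the cone. -/
def isClosest (P : Set Plane) (u : Plane) (i : Fin 5) (v : Plane) : Prop :=
  v ∈ P ∧ v ∈ cone u i ∧
    ∀ p ∈ P, p ∈ cone u i → (inner ℝ (v - u) (coneDir i) : ℝ) ≤ inner ℝ (p - u) (coneDir i)

/-- The θ₅-graph of a point set `P`: each `u ∈ P` is joined to the closest point of `P`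
in each of its five cones. -/
def thetaGraph (P : Set Plane) : SimpleGraph Plane where
  Adj u v := u ∈ P ∧ v ∈ P ∧ u ≠ v ∧
    ((∃ i, isClosest P u i v) ∨ (∃ i, isClosest P v i u))
  symm := by
    constructor
    rintro u v ⟨hu, hv, hne, h⟩
    exact ⟨hv, hu, hne.symm, h.symm⟩
  loopless := by
    constructor
    rintro u ⟨-, -, hne, -⟩
    exact hne rfl

/-- The Euclidean length of a walk in the θ₅-graph. -/
noncomputable def walkLength {P : Set Plane} {u v : Plane} (p : (thetaGraph P).Walk u v) : ℝ :=
  (p.darts.map fun d => dist d.toProd.1 d.toProd.2).sum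

/-- The canonical triangle `T_{u,w}` (for `w ∈ Cᵢᵘ`): the closed triangle bounded by the two
boundary rays of `Cᵢᵘ` and the line through `w` perpendicular to the bisector of the cone. -/
def canonicalTriangle (u w : Plane) (i : Fin 5) : Set Plane :=
  {p | (p = u ∨ InnerProductGeometry.angle (p - u) (coneDir i) ≤ Real.pi / 5) ∧
       (inner ℝ (p - u) (coneDir i) : ℝ) ≤ inner ℝ (w - u) (coneDir i)}

/-- The size `|T_{u,w}|` of the canonical triangle, i.e. the length of each of the two sides
incident to the apex `u`. -/
noncomputable def triangleSize (u w : Plane) (i : Fin 5) : ℝ :=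
  (inner ℝ (w - u) (coneDir i) : ℝ) / Real.cos (Real.pi / 5)

/-- If the canonical triangle `T_{u,w}` has minimal size among the canonical
triangles of all ordered pairs of distinct points of `P`, then `u` and `w` are adjacent in the
θ₅-graph of `P`. -/
theorem minimal_triangle_implies_edge (P : Set Plane) (hfin : P.Finite)
    (hgp : GeneralPosition P) (u w : Plane) (hu : u ∈ P) (hw : w ∈ P) (huw : u ≠ w)
    (i : Fin 5) (hc : w ∈ cone u i)
    (hmin : ∀ p ∈ P, ∀ q ∈ P, p ≠ q → ∀ j : Fin 5, q ∈ cone p j →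
      triangleSize u w i ≤ triangleSize p q j) :
    (thetaGraph P).Adj u w := by
  have hcos : (0:ℝ) < Real.cos (Real.pi / 5) := by
    apply Real.cos_pos_of_mem_Ioo
    constructor
    · have := Real.pi_pos; linarith
    · have := Real.pi_pos; linarith
  refine ⟨hu, hw, huw, Or.inl ⟨i, hw, hc, ?_⟩⟩
  intro p hp hpc
  have hup : u ≠ p := fun h => hpc.1 h.symm
  have := hmin u hu p hp hup i hpc
  unfold triangleSize at this
  exact (div_le_div_iff_of_pos_right hcos).mp this
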